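/- Let R be a bag over a finite attribute set X and S a bag over a finite attribute set Y. If there exists a finitely supported function T from (X ∪ Y)-tuples to the non-negative rationals whose marginals satisfy T[X] = R and T[Y] = S, then R and S are consistent, i.e., there exists such a T with values in the non-negative integers. -/

import Mathlib

variable {A : Type} [DecidableEq A]

def Tup (D : A → Type) (X : Finset A) : Type := ∀ a : X, D a.1

def Tup.restrict {D : A → Type} {X Z : Finset A} (h : Z ⊆ X) (t : Tup D X) : Tup D Z :=
  fun a => t ⟨a.1, h a.2⟩

abbrev Bag (D : A → Type) (X : Finset A) : Type := Tup D X →₀ ℕ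

noncomputable def Bag.marginal {D : A → Type} {X Z : Finset A} (h : Z ⊆ X) (R : Bag D X) :
    Bag D Z := Finsupp.mapDomain (Tup.restrict h) R

def Consistent {D : A → Type} {X Y : Finset A} (R : Bag D X) (S : Bag D Y) : Prop :=
  ∃ T : Bag D (X ∪ Y),
    Bag.marginal Finset.subset_union_left T = R ∧
    Bag.marginal Finset.subset_union_right T = S

open scoped NNRat

-- mapDomain apply as a filtered sum
lemma mapDomain_apply_eq {α β M : Type*} [AddCommMonoid M] [DecidableEq β]
    (f : α → β) (v : α →₀ M) (b : β) [DecidablePred fun a => f a = b] :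
    Finsupp.mapDomain f v b = ∑ a ∈ v.support.filter (fun a => f a = b), v a := by
  classical
  rw [Finsupp.mapDomain, Finsupp.sum_apply]
  rw [Finsupp.sum]
  rw [Finset.sum_filter]
  refine Finset.sum_congr rfl fun a _ => ?_
  exact Finsupp.single_apply

-- total mass
lemma mass_mapDomain {α β : Type*} (f : α → β) (v : α →₀ ℕ) :
    (Finsupp.mapDomain f v).sum (fun _ m => m) = v.sum (fun _ m => m) := by
  classical
  exact Finsupp.sum_mapDomain_index (fun _ => rfl) (fun _ _ _ => rfl)

lemma coupling {α β γ : Type*} (p : α → γ) (q : β → γ) :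
    ∀ (n : ℕ) (f : α →₀ ℕ) (g : β →₀ ℕ), f.sum (fun _ m => m) = n →
      Finsupp.mapDomain p f = Finsupp.mapDomain q g →
      ∃ h : α × β →₀ ℕ, Finsupp.mapDomain Prod.fst h = f ∧
        Finsupp.mapDomain Prod.snd h = g ∧ ∀ ab ∈ h.support, p ab.1 = q ab.2 := by
  classical
  intro n
  induction n with
  | zero =>
    intro f g hsum heq
    have hf : f = 0 := by
      ext a
      by_contra ha
      have : a ∈ f.support := Finsupp.mem_support_iff.mpr ha
      have := Finset.sum_eq_zero_iff.mp hsum a this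
      exact ha this
    have hg : g = 0 := by
      have : g.sum (fun _ m => m) = 0 := by
        have := mass_mapDomain q g
        rw [← heq, mass_mapDomain, hf] at this
        simpa using this.symm
      ext b
      by_contra hb
      have hm : b ∈ g.support := Finsupp.mem_support_iff.mpr hb
      exact hb (Finset.sum_eq_zero_iff.mp this b hm)
    exact ⟨0, by simp [hf, hg]⟩
  | succ n ih =>
    intro f g hsum heq
    have hfne : f.support.Nonempty := by
      by_contra h
      rw [Finset.not_nonempty_iff_eq_empty] at h
      rw [Finsupp.sum, h] at hsum
      simp at hsum
    obtain ⟨a, ha⟩ := hfne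
    have hfa : f a ≠ 0 := Finsupp.mem_support_iff.mp ha
    -- p a is in the support of mapDomain q g
    have hpa : Finsupp.mapDomain q g (p a) ≠ 0 := by
      rw [← heq, mapDomain_apply_eq]
      have hmem : a ∈ f.support.filter (fun x => p x = p a) := by
        simp [ha, Finsupp.mem_support_iff.mp ha]
      intro h0
      exact hfa (Finset.sum_eq_zero_iff.mp h0 a hmem)
    obtain ⟨b, hb, hqb⟩ : ∃ b ∈ g.support, q b = p a := by
      rw [mapDomain_apply_eq] at hpa
      by_contra hc
      push_neg at hc
      refine hpa (Finset.sum_eq_zero fun x hx => ?_)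
      simp only [Finset.mem_filter] at hx
      exact (hc x hx.1 hx.2).elim
    have hgb : g b ≠ 0 := Finsupp.mem_support_iff.mp hb
    set f' : α →₀ ℕ := f - Finsupp.single a 1 with hf'
    set g' : β →₀ ℕ := g - Finsupp.single b 1 with hg'
    have hfdec : f = f' + Finsupp.single a 1 := by
      ext x
      simp only [hf', Finsupp.add_apply, Finsupp.tsub_apply, Finsupp.single_apply]
      by_cases hx : a = x
      · subst hx; simp; omega
      · simp [hx]
    have hgdec : g = g' + Finsupp.single b 1 := by
      ext x
      simp only [hg', Finsupp.add_apply, Finsupp.tsub_apply, Finsupp.single_apply]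
      by_cases hx : b = x
      · subst hx; simp; omega
      · simp [hx]
    have hsum' : f'.sum (fun _ m => m) = n := by
      have : f.sum (fun _ m => m) = f'.sum (fun _ m => m) + 1 := by
        rw [hfdec, Finsupp.sum_add_index (by simp) (by intros; rfl)]
        simp
      omega
    have heq' : Finsupp.mapDomain p f' = Finsupp.mapDomain q g' := by
      have h1 : Finsupp.mapDomain p f = Finsupp.mapDomain p f' + Finsupp.single (p a) 1 := by
        rw [hfdec, Finsupp.mapDomain_add, Finsupp.mapDomain_single]
      have h2 : Finsupp.mapDomain q g = Finsupp.mapDomain q g' + Finsupp.single (q b) 1 := by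
        rw [hgdec, Finsupp.mapDomain_add, Finsupp.mapDomain_single]
      rw [h1, h2, hqb] at heq
      exact add_right_cancel heq
    obtain ⟨h', hh1, hh2, hh3⟩ := ih f' g' hsum' heq'
    refine ⟨h' + Finsupp.single (a, b) 1, ?_, ?_, ?_⟩
    · rw [Finsupp.mapDomain_add, hh1, Finsupp.mapDomain_single, ← hfdec]
    · rw [Finsupp.mapDomain_add, hh2, Finsupp.mapDomain_single, ← hgdec]
    · intro ab hab
      have := Finsupp.support_add hab
      rw [Finset.mem_union] at this
      rcases this with h | h
      · exact hh3 ab h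
      · have : ab = (a, b) := by
          have := Finsupp.support_single_subset h
          simpa using this
        rw [this]
        exact hqb.symm

theorem stmt2 {D : A → Type} {X Y : Finset A} (R : Bag D X) (S : Bag D Y)
    (T : Tup D (X ∪ Y) → ℚ≥0)
    (hfin : (Function.support T).Finite)
    (hX : ∀ x : Tup D X,
      ∑ᶠ t ∈ {t : Tup D (X ∪ Y) | Tup.restrict Finset.subset_union_left t = x}, T t
        = (R x : ℚ≥0))
    (hY : ∀ y : Tup D Y,
      ∑ᶠ t ∈ {t : Tup D (X ∪ Y) | Tup.restrict Finset.subset_union_right t = y}, T t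
        = (S y : ℚ≥0)) :
    Consistent R S := by
  classical
  set N := hfin.toFinset with hN
  set resX : Tup D (X ∪ Y) → Tup D X := Tup.restrict Finset.subset_union_left with hresX
  set resY : Tup D (X ∪ Y) → Tup D Y := Tup.restrict Finset.subset_union_right with hresY
  set p : Tup D X → Tup D (X ∩ Y) := Tup.restrict Finset.inter_subset_left with hp
  set q : Tup D Y → Tup D (X ∩ Y) := Tup.restrict Finset.inter_subset_right with hq
  -- Claim 1: R x as a finset sum
  have claim1 : ∀ x : Tup D X, (R x : ℚ≥0) = ∑ t ∈ N.filter (fun t => resX t = x), T t := by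
    intro x
    rw [← hX x]
    have hfs : ({t : Tup D (X ∪ Y) | resX t = x} ∩ Function.support T).Finite :=
      hfin.subset (Set.inter_subset_right)
    rw [finsum_mem_eq_sum T hfs]
    apply Finset.sum_subset
    · intro t ht
      rw [Set.Finite.mem_toFinset] at ht
      simp only [Finset.mem_filter, hN, Set.Finite.mem_toFinset]
      exact ⟨ht.2, ht.1⟩
    · intro t ht hnt
      by_contra h0
      apply hnt
      rw [Set.Finite.mem_toFinset]
      simp only [Finset.mem_filter, hN, Set.Finite.mem_toFinset, Function.mem_support] at ht
      exact ⟨ht.2, ht.1⟩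
  have claim1' : ∀ y : Tup D Y, (S y : ℚ≥0) = ∑ t ∈ N.filter (fun t => resY t = y), T t := by
    intro y
    rw [← hY y]
    have hfs : ({t : Tup D (X ∪ Y) | resY t = y} ∩ Function.support T).Finite :=
      hfin.subset (Set.inter_subset_right)
    rw [finsum_mem_eq_sum T hfs]
    apply Finset.sum_subset
    · intro t ht
      rw [Set.Finite.mem_toFinset] at ht
      simp only [Finset.mem_filter, hN, Set.Finite.mem_toFinset]
      exact ⟨ht.2, ht.1⟩
    · intro t ht hnt
      by_contra h0
      apply hnt
      rw [Set.Finite.mem_toFinset]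
      simp only [Finset.mem_filter, hN, Set.Finite.mem_toFinset, Function.mem_support] at ht
      exact ⟨ht.2, ht.1⟩
  -- the composed restrictions agree
  have hcomp : ∀ t, p (resX t) = q (resY t) := fun t => rfl
  -- t in N implies restrictions in supports
  have hmemX : ∀ t ∈ N, resX t ∈ R.support := by
    intro t ht
    rw [hN, Set.Finite.mem_toFinset] at ht
    rw [Finsupp.mem_support_iff]
    intro h0
    have := claim1 (resX t)
    rw [h0] at this
    simp only [Nat.cast_zero] at this
    have : T t = 0 := by
      have hmem : t ∈ N.filter (fun s => resX s = resX t) := by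
        simp [hN, Set.Finite.mem_toFinset, ht]
      have hle := Finset.single_le_sum (f := T) (fun i _ => zero_le) hmem
      rw [← this] at hle
      exact le_antisymm hle (zero_le)
    exact ht this
  have hmemY : ∀ t ∈ N, resY t ∈ S.support := by
    intro t ht
    rw [hN, Set.Finite.mem_toFinset] at ht
    rw [Finsupp.mem_support_iff]
    intro h0
    have := claim1' (resY t)
    rw [h0] at this
    simp only [Nat.cast_zero] at this
    have : T t = 0 := by
      have hmem : t ∈ N.filter (fun s => resY s = resY t) := by
        simp [hN, Set.Finite.mem_toFinset, ht]
      have hle := Finset.single_le_sum (f := T) (fun i _ => zero_le) hmem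
      rw [← this] at hle
      exact le_antisymm hle (zero_le)
    exact ht this
  -- Claim 3: marginals agree on X ∩ Y
  have claim3 : Finsupp.mapDomain p R = Finsupp.mapDomain q S := by
    ext z
    have key : ∀ {ι : Type} (res : Tup D (X ∪ Y) → ι) (pp : ι → Tup D (X ∩ Y))
        (V : ι →₀ ℕ), (∀ i : ι, (V i : ℚ≥0) = ∑ t ∈ N.filter (fun t => res t = i), T t) →
        (∀ t ∈ N, res t ∈ V.support) →
        ((Finsupp.mapDomain pp V z : ℕ) : ℚ≥0) =
          ∑ t ∈ N.filter (fun t => pp (res t) = z), T t := by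
      intro ι res pp V hV hmem
      rw [mapDomain_apply_eq]
      push_cast
      calc ∑ i ∈ V.support.filter (fun i => pp i = z), (V i : ℚ≥0)
          = ∑ i ∈ V.support.filter (fun i => pp i = z),
              ∑ t ∈ N.filter (fun t => res t = i), T t :=
            Finset.sum_congr rfl fun i _ => hV i
        _ = ∑ t ∈ N.filter (fun t => res t ∈ V.support.filter (fun i => pp i = z)), T t :=
            Finset.sum_fiberwise_eq_sum_filter _ _ _ _
        _ = ∑ t ∈ N.filter (fun t => pp (res t) = z), T t := by
            apply Finset.sum_congr _ (fun _ _ => rfl)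
            apply Finset.filter_congr
            intro t ht
            simp only [Finset.mem_filter]
            constructor
            · rintro ⟨_, h⟩; exact h
            · intro h; exact ⟨hmem t ht, h⟩
      ;
    have h1 := key resX p R (fun i => claim1 i) hmemX
    have h2 := key resY q S (fun i => claim1' i) hmemY
    have : ((Finsupp.mapDomain p R z : ℕ) : ℚ≥0) = ((Finsupp.mapDomain q S z : ℕ) : ℚ≥0) := by
      rw [h1, h2]
      exact Finset.sum_congr (by simp only [hcomp]) (fun _ _ => rfl)
    exact_mod_cast this
  -- coupling
  obtain ⟨h, hh1, hh2, hh3⟩ := coupling p q (R.sum fun _ m => m) R S rfl claim3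
  -- gluing
  let glue : Tup D X × Tup D Y → Tup D (X ∪ Y) := fun pr a =>
    if hx : a.1 ∈ X then pr.1 ⟨a.1, hx⟩
    else pr.2 ⟨a.1, by
      rcases Finset.mem_union.mp a.2 with h | h
      · exact absurd h hx
      · exact h⟩
  have hglueX : ∀ pr : Tup D X × Tup D Y, resX (glue pr) = pr.1 := by
    intro pr
    funext a
    show glue pr ⟨a.1, _⟩ = pr.1 a
    simp only [glue]
    rw [dif_pos a.2]
  have hglueY : ∀ pr ∈ h.support, resY (glue pr) = pr.2 := by
    intro pr hpr
    have hcompat : p pr.1 = q pr.2 := hh3 pr hpr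
    funext a
    show glue pr ⟨a.1, _⟩ = pr.2 a
    simp only [glue]
    by_cases hx : a.1 ∈ X
    · rw [dif_pos hx]
      have hmem : a.1 ∈ X ∩ Y := Finset.mem_inter.mpr ⟨hx, a.2⟩
      have := congrFun hcompat ⟨a.1, hmem⟩
      exact this
    · rw [dif_neg hx]
  refine ⟨Finsupp.mapDomain glue h, ?_, ?_⟩
  · show Finsupp.mapDomain resX (Finsupp.mapDomain glue h) = R
    rw [← Finsupp.mapDomain_comp]
    rw [show resX ∘ glue = Prod.fst from funext hglueX]
    exact hh1
  · show Finsupp.mapDomain resY (Finsupp.mapDomain glue h) = S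
    rw [← Finsupp.mapDomain_comp]
    have hc2 := Finsupp.mapDomain_congr (v := h) (f := resY ∘ glue) (g := Prod.snd) hglueY
    rw [hc2]
    exact hh2
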